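/- For any prime p with p ≡ 1 (mod 3), any a ≥ 1, and any natural number d ≤ p^a with d ≡ 2 (mod 3), the sum ∑_{n=0}^{2p^a - 1} C(2n, n+d) is congruent to -4 modulo p. -/

import Mathlib

open Finset

lemma pascal2 (M r : ℕ) :
    (((2*(M+1)).choose (M+1+(r+1)) : ℤ)) =
      (2*M).choose (M+r) + 2*(2*M).choose (M+r+1) + (2*M).choose (M+r+2) := by
  have h1 : 2*(M+1) = (2*M+1)+1 := by ring
  have h2 : M+1+(r+1) = (M+r+1)+1 := by ring
  rw [h1, h2, Nat.choose_succ_succ (2*M+1) (M+r+1)]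
  have h3 : (2*M+1) = (2*M)+1 := rfl
  rw [h3, Nat.choose_succ_succ (2*M) (M+r)]
  have h4 : M+r+1+1 = (M+r+1)+1 := rfl
  rw [h4, Nat.choose_succ_succ (2*M) (M+r+1)]
  push_cast
  ring

lemma key_id (d : ℕ) (N : ℕ) :
    (∑ n ∈ Finset.range N, ((2*n).choose (n+d) : ℤ)) =
    ∑ j ∈ Finset.range N,
      (((2*N).choose (N+(d+1+3*j)) : ℤ) - ((2*N).choose (N+(d+2+3*j)) : ℤ)) := by
  induction N with
  | zero => simp
  | succ N ih =>
    rw [Finset.sum_range_succ, ih]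
    have expand : ∀ j : ℕ,
        (((2*(N+1)).choose ((N+1)+(d+1+3*j)) : ℤ) - ((2*(N+1)).choose ((N+1)+(d+2+3*j)) : ℤ))
        = (((2*N).choose (N+(d+3*j)) : ℤ) - (2*N).choose (N+(d+3*(j+1))))
          + (((2*N).choose (N+(d+1+3*j)) : ℤ) - (2*N).choose (N+(d+2+3*j))) := by
      intro j
      have A := pascal2 N (d+3*j)
      have B := pascal2 N (d+1+3*j)
      have e1 : N+1+(d+1+3*j) = N+1+((d+3*j)+1) := by omega
      have e2 : N+1+(d+2+3*j) = N+1+((d+1+3*j)+1) := by omega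
      have e3 : N+(d+3*j)+1 = N+(d+1+3*j) := by omega
      have e4 : N+(d+3*j)+2 = N+(d+2+3*j) := by omega
      have e5 : N+(d+1+3*j)+1 = N+(d+2+3*j) := by omega
      have e6 : N+(d+1+3*j)+2 = N+(d+3*(j+1)) := by omega
      rw [e3, e4] at A
      rw [e5, e6] at B
      rw [e1, e2, A, B]
      ring
    rw [Finset.sum_congr rfl (fun j _ => expand j), Finset.sum_add_distrib]
    have tel : ∑ j ∈ Finset.range (N+1),
        (((2*N).choose (N+(d+3*j)) : ℤ) - (2*N).choose (N+(d+3*(j+1))))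
        = ((2*N).choose (N+(d+3*0)) : ℤ) - (2*N).choose (N+(d+3*(N+1))) := by
      exact Finset.sum_range_sub' (fun j => ((2*N).choose (N+(d+3*j)) : ℤ)) (N+1)
    rw [tel, Finset.sum_range_succ]
    have z1 : (2*N).choose (N+(d+3*(N+1))) = 0 := Nat.choose_eq_zero_of_lt (by omega)
    have z2 : (2*N).choose (N+(d+1+3*N)) = 0 := Nat.choose_eq_zero_of_lt (by omega)
    have z3 : (2*N).choose (N+(d+2+3*N)) = 0 := Nat.choose_eq_zero_of_lt (by omega)
    rw [z1, z2, z3]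
    simp
    ring

lemma lucas_step (p : ℕ) [Fact p.Prime] (n k : ℕ) :
    ((n.choose k : ZMod p)) = (((n % p).choose (k % p) : ZMod p)) * ((n / p).choose (k / p)) := by
  have h := Choose.choose_modEq_choose_mod_mul_choose_div (p := p) (n := n) (k := k)
  have := (ZMod.intCast_eq_intCast_iff _ _ _).mpr h
  push_cast at this
  exact_mod_cast this

lemma lucas4 (p : ℕ) [Fact p.Prime] (t m : ℕ) :
    (((4 * p ^ t).choose m : ZMod p)) =
      if p ^ t ∣ m then ((Nat.choose 4 (m / p ^ t) : ZMod p)) else 0 := by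
  induction t generalizing m with
  | zero => simp
  | succ t ih =>
    have hp : 2 ≤ p := (Fact.out : p.Prime).two_le
    rw [lucas_step p]
    have h1 : (4 * p ^ (t+1)) % p = 0 := by
      have : p ∣ 4 * p ^ (t+1) := Dvd.dvd.mul_left (dvd_pow_self p (Nat.succ_ne_zero t)) 4
      omega
    have h2 : (4 * p ^ (t+1)) / p = 4 * p ^ t := by
      rw [pow_succ, ← mul_assoc, Nat.mul_div_cancel _ (by omega)]
    rw [h1, h2, ih]
    by_cases hm : p ∣ m
    · have hm0 : m % p = 0 := Nat.mod_eq_zero_of_dvd hm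
      rw [hm0]
      simp only [Nat.choose_self, Nat.cast_one, one_mul]
      have hdvd : p ^ t ∣ m / p ↔ p ^ (t+1) ∣ m := by
        rw [Nat.dvd_div_iff_mul_dvd hm, ← pow_succ']
      have hq : m / p / p ^ t = m / p ^ (t+1) := by
        rw [Nat.div_div_eq_div_mul, ← pow_succ']
      rw [hq]
      by_cases h : p ^ (t+1) ∣ m
      · rw [if_pos (hdvd.mpr h), if_pos h]
      · rw [if_neg (fun hh => h (hdvd.mp hh)), if_neg h]
    · have hm0 : m % p ≠ 0 := fun h => hm (Nat.dvd_of_mod_eq_zero h)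
      have : (Nat.choose 0 (m % p)) = 0 := Nat.choose_eq_zero_of_lt (by omega)
      rw [this]
      have : ¬ p ^ (t+1) ∣ m := fun h => hm (dvd_trans (dvd_pow_self p (Nat.succ_ne_zero t)) h)
      simp [this]

theorem stmt10 (p a d : ℕ) (hp : p.Prime) (h3 : p % 3 = 1) (ha : 1 ≤ a)
    (hd : d ≤ p ^ a) (hd3 : d % 3 = 2) :
    (∑ n ∈ Finset.range (2 * p^a), ((2*n).choose (n + d) : ℤ)) ≡ -4 [ZMOD (p : ℤ)] := by
  haveI : Fact p.Prime := ⟨hp⟩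
  have hp2 : 2 ≤ p := hp.two_le
  have hpa : 1 ≤ p ^ a := Nat.one_le_pow _ _ (by omega)
  have hpa3 : p ^ a % 3 = 1 := by
    rw [Nat.pow_mod, h3, one_pow]; rfl
  -- n + d = n + d rewrite to match key_id (which uses n+d already)
  rw [← ZMod.intCast_eq_intCast_iff]
  rw [key_id d (2 * p^a)]
  push_cast
  set N := 2 * p ^ a with hN
  have h2N : 2 * N = 4 * p ^ a := by omega
  -- evaluation lemmas
  have v0 : ∀ m : ℕ, 0 < m → m % 3 = 0 → (((4 * p ^ a).choose (2 * p ^ a + m) : ZMod p)) = 0 := by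
    intro m hm hm3
    rw [lucas4]
    split_ifs with h
    · obtain ⟨q, hq⟩ := (Nat.dvd_add_right ⟨2, by ring⟩).mp h
      have hqm : (2 * p ^ a + m) / p ^ a = 2 + q := by
        rw [hq, show 2 * p ^ a + p ^ a * q = p ^ a * (2 + q) by ring,
          Nat.mul_div_cancel_left _ (by omega)]
      have hq3 : m % 3 = q % 3 % 3 := by
        rw [hq, Nat.mul_mod, hpa3, one_mul]
      have hq0 : q ≠ 0 := by rintro rfl; simp at hq; omega
      rw [hqm, Nat.choose_eq_zero_of_lt (by omega)]
      simp
    · rfl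
  have v1 : ∀ m : ℕ, m % 3 = 1 → m ≠ p ^ a → (((4 * p ^ a).choose (2 * p ^ a + m) : ZMod p)) = 0 := by
    intro m hm3 hmne
    rw [lucas4]
    split_ifs with h
    · obtain ⟨q, hq⟩ := (Nat.dvd_add_right ⟨2, by ring⟩).mp h
      have hqm : (2 * p ^ a + m) / p ^ a = 2 + q := by
        rw [hq, show 2 * p ^ a + p ^ a * q = p ^ a * (2 + q) by ring,
          Nat.mul_div_cancel_left _ (by omega)]
      have hq3 : m % 3 = q % 3 % 3 := by
        rw [hq, Nat.mul_mod, hpa3, one_mul]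
      have hq1 : q ≠ 1 := by rintro rfl; simp at hq; exact hmne hq
      rw [hqm, Nat.choose_eq_zero_of_lt (by omega)]
      simp
    · rfl
  have vpa : (((4 * p ^ a).choose (2 * p ^ a + p ^ a) : ZMod p)) = 4 := by
    rw [lucas4]
    rw [if_pos ⟨3, by ring⟩]
    rw [show 2 * p ^ a + p ^ a = p ^ a * 3 by ring, Nat.mul_div_cancel_left _ (by omega)]
    norm_num
  -- the special index
  have hdlt : d + 2 ≤ p ^ a := by omega
  obtain ⟨j0, hj0⟩ : ∃ j0, 3 * j0 = p ^ a - (d + 2) := ⟨(p ^ a - (d + 2)) / 3, by omega⟩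
  have hj0N : j0 ∈ Finset.range N := by
    rw [Finset.mem_range]; omega
  rw [Finset.sum_eq_single_of_mem j0 hj0N ?_]
  · have e1 : N + (d + 1 + 3 * j0) = 2 * p ^ a + (p ^ a - 1) := by omega
    have e2 : N + (d + 2 + 3 * j0) = 2 * p ^ a + p ^ a := by omega
    rw [h2N, e1, e2, vpa, v0 (p ^ a - 1) (by omega) (by omega)]
    push_cast
    ring
  · intro j _ hne
    have e1 : N + (d + 1 + 3 * j) = 2 * p ^ a + (d + 1 + 3 * j) := by omega
    have e2 : N + (d + 2 + 3 * j) = 2 * p ^ a + (d + 2 + 3 * j) := by omega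
    rw [h2N, e1, e2, v0 (d + 1 + 3 * j) (by omega) (by omega),
      v1 (d + 2 + 3 * j) (by omega) (by omega)]
    ring
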